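/- If a k-cochain f is 1-double balanced (perfectly double balanced) in dimension ℓ, then f is 1-double balanced in every dimension ℓ' < ℓ. -/

import Mathlib

open Finset

/-- A finite simplicial complex on vertex set `V`: a downwards-closed family of finite sets. -/
structure SC (V : Type*) [DecidableEq V] where
  faces : Finset (Finset V)
  downClosed : ∀ σ ∈ faces, ∀ τ ⊆ σ, τ ∈ faces

namespace SC

variable {V : Type*} [DecidableEq V] [Fintype V] (X : SC V)

/-- The number of top faces (of cardinality `d+1`) containing `σ`. -/
def topCount (d : ℕ) (σ : Finset V) : ℕ :=
  (X.faces.filter fun Δ => Δ.card = d + 1 ∧ σ ⊆ Δ).card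

/-- `X` is a (nonempty) pure `d`-dimensional complex: every face is contained in a
face of cardinality `d+1`. -/
def Pure (d : ℕ) : Prop :=
  (∅ : Finset V) ∈ X.faces ∧ (∀ σ ∈ X.faces, σ.card ≤ d + 1) ∧
    ∀ σ ∈ X.faces, ∃ Δ ∈ X.faces, σ ⊆ Δ ∧ Δ.card = d + 1

/-- The `k`-dimensional faces (cardinality `k+1`) of `X`. -/
def kFaces (k : ℕ) : Finset (Finset V) := X.faces.filter fun σ => σ.card = k + 1

/-- The faces of cardinality `c` of the link of `σ`. -/
def linkFacesC (σ : Finset V) (c : ℕ) : Finset (Finset V) :=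
  univ.filter fun τ => Disjoint τ σ ∧ σ ∪ τ ∈ X.faces ∧ τ.card = c

/-- The weighted density, in the link of `σ` of a pure `d`-dimensional complex, of a set
`S` of cardinality-`c` faces of the link, with respect to the distribution induced by the
uniform distribution on top faces. -/
noncomputable def linkNorm (d : ℕ) (σ : Finset V) (c : ℕ) (S : Finset (Finset V)) : ℝ :=
  (∑ τ ∈ S, (X.topCount d (σ ∪ τ) : ℝ)) /
    (((d + 1 - σ.card).choose c : ℝ) * (X.topCount d σ : ℝ))

/-- The localization `f_σ` of a set `f` of faces to the link of `σ`:
all `τ` (disjoint from `σ`) with `σ ∪ τ ∈ f`. -/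
def loc (_X : SC V) (f : Finset (Finset V)) (σ : Finset V) : Finset (Finset V) :=
  univ.filter fun τ => Disjoint τ σ ∧ σ ∪ τ ∈ f

/-- The restriction of the localization, `(f_{σ∖u})^u`, viewed in the link of `σ`:
all faces `τ` of the link of `σ` with `(σ ∖ {u}) ∪ τ ∈ f`. -/
def restLoc (f : Finset (Finset V)) (σ : Finset V) (u : V) : Finset (Finset V) :=
  univ.filter fun τ => Disjoint τ σ ∧ σ ∪ τ ∈ X.faces ∧ σ.erase u ∪ τ ∈ f

/-- The restriction `f^u` of a set `f` of `k`-faces to the link of the vertex `u`. -/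
def restrict (f : Finset (Finset V)) (u : V) : Finset (Finset V) :=
  f.filter fun τ => u ∉ τ ∧ insert u τ ∈ X.faces

/-- `f` (a set of `k`-faces) is `α`-double balanced in dimension `ℓ`:
for every `ℓ`-face `σ`, `‖f_σ‖ ≤ α · E_{u∈σ} ‖(f_{σ∖u})^u‖`. -/
noncomputable def DoubleBalanced (d k : ℕ) (f : Finset (Finset V)) (α : ℝ) (ℓ : ℕ) : Prop :=
  ∀ σ ∈ X.kFaces ℓ,
    X.linkNorm d σ (k - ℓ) (X.loc f σ) ≤
      α * ((σ.card : ℝ)⁻¹ * ∑ u ∈ σ, X.linkNorm d σ (k - ℓ + 1) (X.restLoc f σ u))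

/-- `δᵢ(f)`: the `(k+1)`-dimensional faces containing exactly `i` `k`-faces of `f`. -/
def deltaI (k i : ℕ) (f : Finset (Finset V)) : Finset (Finset V) :=
  (X.kFaces (k + 1)).filter fun ρ => ((ρ.powersetCard (k + 1)).filter (· ∈ f)).card = i

/-- The mutual weight `‖(g, σ)‖` of a set `g` of faces of the link of `σ`, where `σ ∪ τ`
has cardinality `m` for `τ ∈ g`: the probability that a random `(m-1)`-dimensional face
`ρ` together with a uniformly random `σ.card`-subset `σ'` of `ρ` satisfies
`σ' = σ` and `ρ ∖ σ ∈ g`. -/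
noncomputable def mutualWeight (d m : ℕ) (σ : Finset V) (g : Finset (Finset V)) : ℝ :=
  ∑ τ ∈ g, (X.topCount d (σ ∪ τ) : ℝ) /
    (((d + 1).choose m : ℝ) * (m.choose σ.card : ℝ) * (X.topCount d ∅ : ℝ))

/-- The vertex-set localization of `f` to the link of `σ`. -/
def locV (_X : SC V) (f : Finset (Finset V)) (σ : Finset V) : Finset V :=
  univ.filter fun v => v ∉ σ ∧ insert v σ ∈ f

/-- The edges of the link of `σ` with exactly `i` endpoints in the localization `f_σ`. -/
def linkDelta (σ : Finset V) (i : ℕ) (f : Finset (Finset V)) : Finset (Finset V) :=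
  (X.linkFacesC σ 2).filter fun e => (e ∩ X.locV f σ).card = i

/-- The (off-diagonal) adjacency weights of the underlying graph of the link of `σ`. -/
noncomputable def linkAdj (d : ℕ) (σ : Finset V) (u v : V) : ℝ :=
  if u ≠ v then (X.topCount d (σ ∪ {u, v}) : ℝ) else 0

/-- The underlying weighted graph of the link of `σ` is a `lam`-one-sided spectral
expander: the quadratic form of the adjacency operator on functions orthogonal
(w.r.t. the vertex measure) to constants is at most `lam` times the norm. -/
def OneSidedLink (d : ℕ) (lam : ℝ) (σ : Finset V) : Prop :=
  ∀ g : V → ℝ, (∑ v, (X.topCount d (insert v σ) : ℝ) * g v) = 0 →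
    ∑ u, ∑ v, X.linkAdj d σ u v * g u * g v ≤
      lam * (((d - σ.card : ℕ) : ℝ) * ∑ v, (X.topCount d (insert v σ) : ℝ) * g v ^ 2)

/-- `X` is a `lam`-one-sided local spectral expander: the underlying graph of the link of
every face of dimension at most `d-2` (including the empty face) is a `lam`-one-sided
spectral expander. -/
def OneSidedLocalExpander (d : ℕ) (lam : ℝ) : Prop :=
  ∀ σ ∈ X.faces, σ.card + 1 ≤ d → X.OneSidedLink d lam σ

/-- The coboundary (over `𝔽₂`, in the link of `σ`) of a set `h` of cardinality-`c` faces: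
the cardinality-`(c+1)` faces of the link containing an odd number of
cardinality-`c` subfaces from `h`. -/
def cob (σ : Finset V) (c : ℕ) (h : Finset (Finset V)) : Finset (Finset V) :=
  (X.linkFacesC σ (c + 1)).filter fun τ => ¬ Even ((τ.powersetCard c ∩ h).card)

/-- `g` (a set of cardinality-`(c+1)` faces of the link of `σ`) is a cocycle: every
cardinality-`(c+2)` face of the link contains an even number of faces of `g`. -/
def IsCocycle (σ : Finset V) (c : ℕ) (g : Finset (Finset V)) : Prop :=
  ∀ τ ∈ X.linkFacesC σ (c + 2), Even ((τ.powersetCard (c + 1) ∩ g).card)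

/-- `g` (a set of cardinality-`(c+1)` faces of the link of `σ`) is a coboundary. -/
def IsCoboundary (σ : Finset V) (c : ℕ) (g : Finset (Finset V)) : Prop :=
  ∃ h ⊆ X.linkFacesC σ c, g = X.cob σ c h

/-- The distance (over `𝔽₂`) of `g` from the space of coboundaries, in the link of `σ`,
where `g` is a set of cardinality-`(c+1)` faces. -/
noncomputable def distToCob (d : ℕ) (σ : Finset V) (c : ℕ) (g : Finset (Finset V)) : ℝ :=
  ((X.linkFacesC σ c).powerset).inf' ⟨∅, Finset.empty_mem_powerset _⟩ fun h =>
    X.linkNorm d σ (c + 1) ((g \ X.cob σ c h) ∪ (X.cob σ c h \ g))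

/-- `g` (a set of cardinality-`(c+1)` faces of the link of `σ`) is a minimal cochain:
its weight cannot be reduced by adding a coboundary. -/
def MinimalCochain (d : ℕ) (σ : Finset V) (c : ℕ) (g : Finset (Finset V)) : Prop :=
  X.linkNorm d σ (c + 1) g = X.distToCob d σ c g

/-- The link of `σ` is a `β`-coboundary expander: in every dimension, the weight of the
coboundary of a cochain is at least `β` times its distance from the coboundaries. -/
def LinkCoboundaryExpander (d : ℕ) (β : ℝ) (σ : Finset V) : Prop :=
  ∀ c : ℕ, ∀ g ⊆ X.linkFacesC σ (c + 1),
    β * X.distToCob d σ c g ≤ X.linkNorm d σ (c + 2) (X.cob σ (c + 1) g)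

/-- A set `f` of `k`-dimensional faces is locally minimal: its localization to the link of
every nonempty face of dimension `< k` is a minimal cochain there. -/
def LocallyMinimal (d k : ℕ) (f : Finset (Finset V)) : Prop :=
  ∀ σ ∈ X.faces, 1 ≤ σ.card → σ.card ≤ k →
    X.MinimalCochain d σ (k - σ.card) (X.loc f σ)

end SC

namespace SC

variable {V : Type*} [DecidableEq V] [Fintype V] (X : SC V)

lemma aux_face_of_topCount_ne {d : ℕ} {ρ : Finset V} (h : X.topCount d ρ ≠ 0) :
    ρ ∈ X.faces := by
  rw [topCount, Finset.card_ne_zero] at h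
  obtain ⟨Δ, hΔ⟩ := h
  simp only [mem_filter] at hΔ
  exact X.downClosed Δ hΔ.1 ρ hΔ.2.2

lemma aux_topCount_pos {d : ℕ} (hpure : X.Pure d) {ρ : Finset V} (h : ρ ∈ X.faces) :
    0 < X.topCount d ρ := by
  obtain ⟨Δ, hΔ, hsub, hcard⟩ := hpure.2.2 ρ h
  rw [topCount]
  exact Finset.card_pos.mpr ⟨Δ, by simp [mem_filter, hΔ, hsub, hcard]⟩

lemma aux_sum_insert (d : ℕ) (ρ : Finset V) :
    ∑ v ∈ ρᶜ, X.topCount d (insert v ρ) = (d + 1 - ρ.card) * X.topCount d ρ := by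
  have h1 : ∀ v, X.topCount d (insert v ρ)
      = ∑ Δ ∈ X.faces.filter (fun Δ => Δ.card = d + 1 ∧ ρ ⊆ Δ),
          if v ∈ Δ then 1 else 0 := by
    intro v
    rw [topCount, Finset.card_filter, Finset.sum_filter]
    apply Finset.sum_congr rfl
    intro Δ _
    by_cases h2 : Δ.card = d + 1 ∧ ρ ⊆ Δ
    · by_cases h3 : v ∈ Δ <;> simp [h2, h3, insert_subset_iff]
    · rw [if_neg h2, if_neg]
      rintro ⟨hc, hs⟩
      exact h2 ⟨hc, (insert_subset_iff.mp hs).2⟩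
  rw [Finset.sum_congr rfl fun v _ => h1 v, Finset.sum_comm, topCount, Finset.card_filter,
    ← Finset.sum_filter, mul_comm, Finset.sum_mul, one_mul]
  apply Finset.sum_congr rfl
  intro Δ hΔ
  simp only [mem_filter] at hΔ
  have h4 : ∑ v ∈ ρᶜ, (if v ∈ Δ then (1:ℕ) else 0) = (Δ \ ρ).card := by
    rw [Finset.sum_ite_mem, ← Finset.card_eq_sum_ones]
    congr 1
    ext x
    simp [Finset.mem_sdiff, and_comm]
  rw [h4, Finset.card_sdiff_of_subset hΔ.2.2, hΔ.2.1]

lemma aux_loc_mem {f : Finset (Finset V)} {σ τ : Finset V} :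
    τ ∈ X.loc f σ ↔ Disjoint τ σ ∧ σ ∪ τ ∈ f := by
  simp [loc]

lemma aux_restLoc_mem {f : Finset (Finset V)} {σ τ : Finset V} {u : V} :
    τ ∈ X.restLoc f σ u ↔ Disjoint τ σ ∧ σ ∪ τ ∈ X.faces ∧ σ.erase u ∪ τ ∈ f := by
  simp [restLoc]

lemma aux_kFaces_card {k : ℕ} {ρ : Finset V} (h : ρ ∈ X.kFaces k) : ρ.card = k + 1 :=
  (Finset.mem_filter.mp h).2

lemma aux_loc_card {k : ℕ} {f : Finset (Finset V)} (hf : f ⊆ X.kFaces k)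
    {σ τ : Finset V} (hτ : τ ∈ X.loc f σ) : σ.card + τ.card = k + 1 := by
  rw [X.aux_loc_mem] at hτ
  rw [← Finset.card_union_of_disjoint hτ.1.symm]
  exact X.aux_kFaces_card (hf hτ.2)

lemma aux_restLoc_card {k : ℕ} {f : Finset (Finset V)} (hf : f ⊆ X.kFaces k)
    {σ τ : Finset V} {u : V} (hu : u ∈ σ) (hτ : τ ∈ X.restLoc f σ u) :
    σ.card + τ.card = k + 2 := by
  rw [X.aux_restLoc_mem] at hτ
  have h1 : (σ.erase u).card + τ.card = k + 1 := by
    rw [← Finset.card_union_of_disjoint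
      (disjoint_of_subset_right (Finset.erase_subset _ _) hτ.1).symm]
    exact X.aux_kFaces_card (hf hτ.2.2)
  have h2 : (σ.erase u).card = σ.card - 1 := Finset.card_erase_of_mem hu
  have h3 : 1 ≤ σ.card := Finset.card_pos.mpr ⟨u, hu⟩
  omega

lemma aux_union_insert (σ τ : Finset V) (v : V) :
    insert v σ ∪ τ = σ ∪ insert v τ := by
  rw [Finset.insert_union, Finset.union_insert]

lemma aux_sum_loc_insert (f : Finset (Finset V)) {σ : Finset V} {v : V} (hv : v ∉ σ)
    (g : Finset V → ℝ) :
    ∑ τ ∈ X.loc f (insert v σ), g (insert v σ ∪ τ)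
      = ∑ τ ∈ (X.loc f σ).filter (v ∈ ·), g (σ ∪ τ) := by
  refine Finset.sum_bij' (fun τ _ => insert v τ) (fun τ _ => τ.erase v) ?_ ?_ ?_ ?_ ?_
  case refine_1 =>
    intro τ hτ
    rw [X.aux_loc_mem] at hτ
    have hd : Disjoint τ σ := disjoint_of_subset_right (subset_insert v σ) hτ.1
    rw [mem_filter, X.aux_loc_mem]
    refine ⟨⟨?_, ?_⟩, mem_insert_self v τ⟩
    · exact Finset.disjoint_insert_left.mpr ⟨hv, hd⟩
    · rw [← aux_union_insert]; exact hτ.2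
  case refine_2 =>
    intro τ hτ
    rw [mem_filter, X.aux_loc_mem] at hτ
    rw [X.aux_loc_mem]
    constructor
    · rw [Finset.disjoint_insert_right]
      exact ⟨Finset.notMem_erase v τ,
        disjoint_of_subset_left (Finset.erase_subset _ _) hτ.1.1⟩
    · rw [aux_union_insert, Finset.insert_erase hτ.2]; exact hτ.1.2
  case refine_3 =>
    intro τ hτ
    rw [X.aux_loc_mem] at hτ
    exact Finset.erase_insert fun h => (Finset.disjoint_left.mp hτ.1 h) (mem_insert_self v σ)
  case refine_4 =>
    intro τ hτ
    rw [mem_filter] at hτ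
    exact Finset.insert_erase hτ.2
  case refine_5 =>
    intro τ hτ
    rw [aux_union_insert]

lemma aux_sum_restLoc_insert (f : Finset (Finset V)) {σ : Finset V} {v u : V} (hv : v ∉ σ)
    (hu : u ∈ σ) (g : Finset V → ℝ) :
    ∑ τ ∈ X.restLoc f (insert v σ) u, g (insert v σ ∪ τ)
      = ∑ τ ∈ (X.restLoc f σ u).filter (v ∈ ·), g (σ ∪ τ) := by
  have hne : v ≠ u := fun h => hv (h ▸ hu)
  have herase : (insert v σ).erase u = insert v (σ.erase u) :=
    Finset.erase_insert_of_ne hne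
  refine Finset.sum_bij' (fun τ _ => insert v τ) (fun τ _ => τ.erase v) ?_ ?_ ?_ ?_ ?_
  case refine_1 =>
    intro τ hτ
    rw [X.aux_restLoc_mem] at hτ
    have hd : Disjoint τ σ := disjoint_of_subset_right (subset_insert v σ) hτ.1
    rw [mem_filter, X.aux_restLoc_mem]
    refine ⟨⟨Finset.disjoint_insert_left.mpr ⟨hv, hd⟩, ?_, ?_⟩, mem_insert_self v τ⟩
    · rw [← aux_union_insert]; exact hτ.2.1
    · rw [← aux_union_insert]; rw [herase] at hτ; exact hτ.2.2
  case refine_2 =>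
    intro τ hτ
    rw [mem_filter, X.aux_restLoc_mem] at hτ
    rw [X.aux_restLoc_mem]
    refine ⟨?_, ?_, ?_⟩
    · rw [Finset.disjoint_insert_right]
      exact ⟨Finset.notMem_erase v τ,
        disjoint_of_subset_left (Finset.erase_subset _ _) hτ.1.1⟩
    · rw [aux_union_insert, Finset.insert_erase hτ.2]; exact hτ.1.2.1
    · rw [herase, aux_union_insert, Finset.insert_erase hτ.2]; exact hτ.1.2.2
  case refine_3 =>
    intro τ hτ
    rw [X.aux_restLoc_mem] at hτ
    exact Finset.erase_insert fun h => (Finset.disjoint_left.mp hτ.1 h) (mem_insert_self v σ)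
  case refine_4 =>
    intro τ hτ
    rw [mem_filter] at hτ
    exact Finset.insert_erase hτ.2
  case refine_5 =>
    intro τ hτ
    rw [aux_union_insert]

lemma aux_sum_restLoc_self (d : ℕ) (f : Finset (Finset V)) {σ : Finset V} {v : V}
    (hv : v ∉ σ) :
    ∑ τ ∈ X.restLoc f (insert v σ) v, (X.topCount d (insert v σ ∪ τ) : ℝ)
      = ∑ τ ∈ (X.loc f σ).filter (fun τ => v ∉ τ),
          (X.topCount d (insert v (σ ∪ τ)) : ℝ) := by
  rw [show (fun τ => (X.topCount d (insert v σ ∪ τ) : ℝ))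
      = fun τ => (X.topCount d (insert v (σ ∪ τ)) : ℝ) from
    funext fun τ => by rw [Finset.insert_union]]
  apply Finset.sum_subset
  · intro τ hτ
    rw [X.aux_restLoc_mem] at hτ
    rw [mem_filter, X.aux_loc_mem]
    have hvτ : v ∉ τ := fun h => (Finset.disjoint_left.mp hτ.1 h) (mem_insert_self v σ)
    refine ⟨⟨disjoint_of_subset_right (subset_insert v σ) hτ.1, ?_⟩, hvτ⟩
    rw [← Finset.erase_insert hv]; exact hτ.2.2
  · intro τ hτ1 hτ2
    rw [mem_filter, X.aux_loc_mem] at hτ1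
    rw [Nat.cast_eq_zero]
    by_contra h
    apply hτ2
    rw [X.aux_restLoc_mem]
    have hface : insert v (σ ∪ τ) ∈ X.faces := X.aux_face_of_topCount_ne h
    refine ⟨Finset.disjoint_insert_right.mpr ⟨hτ1.2, hτ1.1.1⟩, ?_, ?_⟩
    · rw [Finset.insert_union]; exact hface
    · rw [Finset.erase_insert hv]; exact hτ1.1.2

lemma aux_swap (σ : Finset V) (S : Finset (Finset V)) (g : Finset V → ℝ)
    (hdisj : ∀ τ ∈ S, Disjoint τ σ) :
    ∑ v ∈ σᶜ, ∑ τ ∈ S.filter (v ∈ ·), g τ = ∑ τ ∈ S, (τ.card : ℝ) * g τ := by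
  simp only [Finset.sum_filter]
  rw [Finset.sum_comm]
  apply Finset.sum_congr rfl
  intro τ hτ
  rw [Finset.sum_ite_mem]
  have : σᶜ ∩ τ = τ := by
    apply Finset.inter_eq_right.mpr
    intro x hx
    exact Finset.mem_compl.mpr (Finset.disjoint_left.mp (hdisj τ hτ) hx)
  rw [this, Finset.sum_const, nsmul_eq_mul]

lemma aux_swap2 (d : ℕ) (σ : Finset V) (S : Finset (Finset V)) :
    ∑ v ∈ σᶜ, ∑ τ ∈ S.filter (fun τ => v ∉ τ), (X.topCount d (insert v (σ ∪ τ)) : ℝ)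
      = ∑ τ ∈ S, ((d + 1 - (σ ∪ τ).card : ℕ) : ℝ) * (X.topCount d (σ ∪ τ) : ℝ) := by
  simp only [Finset.sum_filter]
  rw [Finset.sum_comm]
  apply Finset.sum_congr rfl
  intro τ hτ
  have h1 : ∑ v ∈ σᶜ, (if v ∉ τ then (X.topCount d (insert v (σ ∪ τ)) : ℝ) else 0)
      = ∑ v ∈ (σ ∪ τ)ᶜ, (X.topCount d (insert v (σ ∪ τ)) : ℝ) := by
    rw [← Finset.sum_filter]
    apply Finset.sum_congr _ fun _ _ => rfl
    ext x
    simp [not_or, and_comm]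
  rw [h1, ← Nat.cast_sum, aux_sum_insert, Nat.cast_mul]

end SC

set_option maxHeartbeats 2000000 in
lemma aux_onestep {V : Type*} [DecidableEq V] [Fintype V] (X : SC V) (d k m : ℕ)
    (hpure : X.Pure d) (hmk : m + 2 ≤ k) (hkd : k ≤ d)
    (f : Finset (Finset V)) (hf : f ⊆ X.kFaces k)
    (hdb : X.DoubleBalanced d k f 1 (m + 1)) :
    X.DoubleBalanced d k f 1 m := by
  obtain ⟨c2, hc2⟩ : ∃ c2, k = m + 2 + c2 := ⟨k - (m + 2), by omega⟩
  obtain ⟨e, he⟩ : ∃ e, d = k + e := ⟨d - k, by omega⟩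
  have hk1 : k - m = c2 + 2 := by omega
  have hk2 : k - (m + 1) = c2 + 1 := by omega
  have hk2' : k - (m + 1) + 1 = c2 + 2 := by omega
  have hn1 : d + 1 - (m + 1) = c2 + 2 + e := by omega
  have hn2 : d + 1 - (m + 2) = c2 + 1 + e := by omega
  intro σ hσ
  have hσX : σ ∈ X.faces := (Finset.mem_filter.mp hσ).1
  have hσcard : σ.card = m + 1 := (Finset.mem_filter.mp hσ).2
  simp only [SC.linkNorm, hσcard, hn1, hk1, show c2 + 2 + 1 = c2 + 3 from by omega]
  rw [← Finset.sum_div]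
  set N : ℝ := (X.topCount d σ : ℝ) with hNdef
  set A : ℝ := ∑ τ ∈ X.loc f σ, (X.topCount d (σ ∪ τ) : ℝ) with hAdef
  set P : ℝ := ∑ u ∈ σ, ∑ τ ∈ X.restLoc f σ u, (X.topCount d (σ ∪ τ) : ℝ) with hPdef
  set C1 : ℝ := ((c2 + 2 + e).choose (c2 + 2) : ℝ) with hC1def
  set C2 : ℝ := ((c2 + 2 + e).choose (c2 + 3) : ℝ) with hC2def
  set D1 : ℝ := ((c2 + 1 + e).choose (c2 + 1) : ℝ) with hD1def
  set D2 : ℝ := ((c2 + 1 + e).choose (c2 + 2) : ℝ) with hD2def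
  clear_value N A P C1 C2 D1 D2
  have hNpos : (0 : ℝ) < N := by
    rw [hNdef]
    exact_mod_cast X.aux_topCount_pos hpure hσX
  have hA0 : 0 ≤ A := by
    rw [hAdef]
    exact Finset.sum_nonneg fun τ _ => by positivity
  have hP0 : 0 ≤ P := by
    rw [hPdef]
    exact Finset.sum_nonneg fun u _ => Finset.sum_nonneg fun τ _ => by positivity
  -- the key inequality, per vertex
  have star : ∀ v ∈ σᶜ,
      (∑ τ ∈ X.loc f (insert v σ), (X.topCount d (insert v σ ∪ τ) : ℝ)) / D1
        ≤ ((m : ℝ) + 2)⁻¹ * ∑ u ∈ insert v σ,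
            (∑ τ ∈ X.restLoc f (insert v σ) u,
              (X.topCount d (insert v σ ∪ τ) : ℝ)) / D2 := by
    intro v hv
    have hv' : v ∉ σ := Finset.mem_compl.mp hv
    have hcard : (insert v σ).card = m + 2 := by
      rw [Finset.card_insert_of_notMem hv', hσcard]
    by_cases hface : insert v σ ∈ X.faces
    · have hmem : insert v σ ∈ X.kFaces (m + 1) :=
        Finset.mem_filter.mpr ⟨hface, hcard⟩
      have h := hdb _ hmem
      rw [one_mul] at h
      simp only [SC.linkNorm, hcard, hn2, hk2, hk2'] at h
      have hNv : (0 : ℝ) < (X.topCount d (insert v σ) : ℝ) := by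
        exact_mod_cast X.aux_topCount_pos hpure hface
      rw [← hD1def, ← hD2def] at h
      push_cast at h
      simp only [← div_div] at h
      rw [← Finset.sum_div, ← mul_div_assoc] at h
      exact (div_le_div_iff_of_pos_right hNv).mp h
    · have hloc : X.loc f (insert v σ) = ∅ := by
        rw [Finset.eq_empty_iff_forall_notMem]
        intro τ hτ
        rw [X.aux_loc_mem] at hτ
        exact hface (X.downClosed _ (Finset.mem_filter.mp (hf hτ.2)).1 _
          Finset.subset_union_left)
      have hrest : ∀ u, X.restLoc f (insert v σ) u = ∅ := fun u => by
        rw [Finset.eq_empty_iff_forall_notMem]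
        intro τ hτ
        rw [X.aux_restLoc_mem] at hτ
        exact hface (X.downClosed _ hτ.2.1 _ Finset.subset_union_left)
      simp [hloc, hrest]
  have hsum := Finset.sum_le_sum star
  -- compute the left side of the summed inequality
  have hL : ∑ v ∈ σᶜ, (∑ τ ∈ X.loc f (insert v σ),
      (X.topCount d (insert v σ ∪ τ) : ℝ)) / D1 = ((c2 : ℝ) + 2) * A / D1 := by
    rw [← Finset.sum_div]
    congr 1
    have h1 : ∀ v ∈ σᶜ, (∑ τ ∈ X.loc f (insert v σ),
        (X.topCount d (insert v σ ∪ τ) : ℝ))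
        = ∑ τ ∈ (X.loc f σ).filter (v ∈ ·), (X.topCount d (σ ∪ τ) : ℝ) :=
      fun v hv => X.aux_sum_loc_insert f (Finset.mem_compl.mp hv)
        (fun ρ => (X.topCount d ρ : ℝ))
    rw [Finset.sum_congr rfl h1]
    rw [SC.aux_swap σ _ _ fun τ hτ => (X.aux_loc_mem.mp hτ).1, hAdef, Finset.mul_sum]
    apply Finset.sum_congr rfl
    intro τ hτ
    have := X.aux_loc_card hf hτ
    have hτc : τ.card = c2 + 2 := by omega
    rw [hτc]
    push_cast
    ring
  -- diagonal term
  have hdiag : ∑ v ∈ σᶜ, (∑ τ ∈ X.restLoc f (insert v σ) v,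
      (X.topCount d (insert v σ ∪ τ) : ℝ)) = (e : ℝ) * A := by
    have h1 : ∀ v ∈ σᶜ, (∑ τ ∈ X.restLoc f (insert v σ) v,
        (X.topCount d (insert v σ ∪ τ) : ℝ))
        = ∑ τ ∈ (X.loc f σ).filter (fun τ => v ∉ τ),
            (X.topCount d (insert v (σ ∪ τ)) : ℝ) :=
      fun v hv => X.aux_sum_restLoc_self d f (Finset.mem_compl.mp hv)
    rw [Finset.sum_congr rfl h1]
    rw [X.aux_swap2 d σ (X.loc f σ), hAdef, Finset.mul_sum]
    apply Finset.sum_congr rfl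
    intro τ hτ
    have h1 := X.aux_loc_card hf hτ
    have h2 : (σ ∪ τ).card = k + 1 := by
      rw [Finset.card_union_of_disjoint (X.aux_loc_mem.mp hτ).1.symm]
      omega
    rw [h2, show d + 1 - (k + 1) = e from by omega]
  -- off-diagonal terms
  have hoff : ∀ u ∈ σ, ∑ v ∈ σᶜ, (∑ τ ∈ X.restLoc f (insert v σ) u,
      (X.topCount d (insert v σ ∪ τ) : ℝ))
      = ((c2 : ℝ) + 3) * ∑ τ ∈ X.restLoc f σ u, (X.topCount d (σ ∪ τ) : ℝ) := by
    intro u hu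
    have h1 : ∀ v ∈ σᶜ, (∑ τ ∈ X.restLoc f (insert v σ) u,
        (X.topCount d (insert v σ ∪ τ) : ℝ))
        = ∑ τ ∈ (X.restLoc f σ u).filter (v ∈ ·), (X.topCount d (σ ∪ τ) : ℝ) :=
      fun v hv => X.aux_sum_restLoc_insert f (Finset.mem_compl.mp hv) hu
        (fun ρ => (X.topCount d ρ : ℝ))
    rw [Finset.sum_congr rfl h1]
    rw [SC.aux_swap σ _ _ fun τ hτ => (X.aux_restLoc_mem.mp hτ).1, Finset.mul_sum]
    apply Finset.sum_congr rfl
    intro τ hτ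
    have := X.aux_restLoc_card hf hu hτ
    have hτc : τ.card = c2 + 3 := by omega
    rw [hτc]
    push_cast
    ring
  -- right side of the summed inequality
  have hR : ∑ v ∈ σᶜ, (((m : ℝ) + 2)⁻¹ * ∑ u ∈ insert v σ,
      (∑ τ ∈ X.restLoc f (insert v σ) u, (X.topCount d (insert v σ ∪ τ) : ℝ)) / D2)
      = ((m : ℝ) + 2)⁻¹ * ((e : ℝ) * A / D2 + ((c2 : ℝ) + 3) * P / D2) := by
    rw [← Finset.mul_sum]
    congr 1
    have hsplit : ∀ v ∈ σᶜ, ∑ u ∈ insert v σ,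
        (∑ τ ∈ X.restLoc f (insert v σ) u, (X.topCount d (insert v σ ∪ τ) : ℝ)) / D2
        = (∑ τ ∈ X.restLoc f (insert v σ) v, (X.topCount d (insert v σ ∪ τ) : ℝ)) / D2
          + ∑ u ∈ σ, (∑ τ ∈ X.restLoc f (insert v σ) u,
              (X.topCount d (insert v σ ∪ τ) : ℝ)) / D2 := by
      intro v hv
      rw [Finset.sum_insert (Finset.mem_compl.mp hv)]
    rw [Finset.sum_congr rfl hsplit, Finset.sum_add_distrib, ← Finset.sum_div, hdiag]
    congr 1
    rw [Finset.sum_comm]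
    calc ∑ u ∈ σ, ∑ v ∈ σᶜ, (∑ τ ∈ X.restLoc f (insert v σ) u,
          (X.topCount d (insert v σ ∪ τ) : ℝ)) / D2
        = ∑ u ∈ σ, (∑ v ∈ σᶜ, ∑ τ ∈ X.restLoc f (insert v σ) u,
            (X.topCount d (insert v σ ∪ τ) : ℝ)) / D2 := by
          exact Finset.sum_congr rfl fun u _ => (Finset.sum_div _ _ _).symm
      _ = ∑ u ∈ σ, (((c2 : ℝ) + 3) * ∑ τ ∈ X.restLoc f σ u,
            (X.topCount d (σ ∪ τ) : ℝ)) / D2 :=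
          Finset.sum_congr rfl fun u hu => by rw [hoff u hu]
      _ = ((c2 : ℝ) + 3) * P / D2 := by
          rw [← Finset.sum_div, hPdef, Finset.mul_sum]
  rw [hL, hR] at hsum
  -- hsum : (c2+2)*A/D1 ≤ (m+2)⁻¹ * (e*A/D2 + (c2+3)*P/D2)
  rcases Nat.eq_zero_or_pos e with he0 | hepos
  · -- degenerate case d = k
    subst he0
    have hD2z : D2 = 0 := by
      rw [hD2def]
      norm_cast
      exact Nat.choose_eq_zero_of_lt (by omega)
    have hC2z : C2 = 0 := by
      rw [hC2def]
      norm_cast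
      exact Nat.choose_eq_zero_of_lt (by omega)
    have hD1o : D1 = 1 := by
      rw [hD1def]
      norm_cast
      exact Nat.choose_self _
    rw [hD2z, hD1o] at hsum
    simp only [div_zero, div_one, Nat.cast_zero, zero_mul, add_zero, mul_zero] at hsum
    have hA0' : A = 0 := le_antisymm (by nlinarith) hA0
    rw [hA0', hC2z]
    simp
  · -- main case d > k
    have hC1pos : (0 : ℝ) < C1 := by
      rw [hC1def]; exact_mod_cast Nat.choose_pos (by omega)
    have hC2pos : (0 : ℝ) < C2 := by
      rw [hC2def]; exact_mod_cast Nat.choose_pos (by omega)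
    have hD1pos : (0 : ℝ) < D1 := by
      rw [hD1def]; exact_mod_cast Nat.choose_pos (by omega)
    have hD2pos : (0 : ℝ) < D2 := by
      rw [hD2def]; exact_mod_cast Nat.choose_pos (by omega)
    have id1n : (c2 + 2 + e) * ((c2 + 1 + e).choose (c2 + 1))
        = ((c2 + 2 + e).choose (c2 + 2)) * (c2 + 2) := by
      have h := Nat.add_one_mul_choose_eq (c2 + 1 + e) (c2 + 1)
      rw [show c2 + 1 + e + 1 = c2 + 2 + e from by omega,
        show c2 + 1 + 1 = c2 + 2 from by omega] at h
      omega
    have id2n : (c2 + 2 + e) * ((c2 + 1 + e).choose (c2 + 2))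
        = ((c2 + 2 + e).choose (c2 + 3)) * (c2 + 3) := by
      have h := Nat.add_one_mul_choose_eq (c2 + 1 + e) (c2 + 2)
      rw [show c2 + 1 + e + 1 = c2 + 2 + e from by omega,
        show c2 + 2 + 1 = c2 + 3 from by omega] at h
      omega
    have id3n : ((c2 + 1 + e).choose (c2 + 2)) * (c2 + 2 + e)
        = ((c2 + 2 + e).choose (c2 + 2)) * e := by
      have h := Nat.choose_mul_succ_eq (c2 + 1 + e) (c2 + 2)
      rw [show c2 + 1 + e + 1 = c2 + 2 + e from by omega,
        show c2 + 2 + e - (c2 + 2) = e from by omega] at h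
      omega
    have id1 : ((c2 : ℝ) + 2 + e) * D1 = C1 * ((c2 : ℝ) + 2) := by
      rw [hC1def, hD1def]; exact_mod_cast id1n
    have id2 : ((c2 : ℝ) + 2 + e) * D2 = C2 * ((c2 : ℝ) + 3) := by
      rw [hC2def, hD2def]; exact_mod_cast id2n
    have id3 : D2 * ((c2 : ℝ) + 2 + e) = C1 * (e : ℝ) := by
      rw [hC1def, hD2def]; exact_mod_cast id3n
    have hx : ((c2 : ℝ) + 2) * A / D1 = ((c2 : ℝ) + 2 + e) * (A / C1) := by
      rw [mul_div_assoc', div_eq_div_iff (ne_of_gt hD1pos) (ne_of_gt hC1pos)]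
      linear_combination (-A) * id1
    have hy : (e : ℝ) * A / D2 = ((c2 : ℝ) + 2 + e) * (A / C1) := by
      rw [mul_div_assoc', div_eq_div_iff (ne_of_gt hD2pos) (ne_of_gt hC1pos)]
      linear_combination (-A) * id3
    have hz : ((c2 : ℝ) + 3) * P / D2 = ((c2 : ℝ) + 2 + e) * (P / C2) := by
      rw [mul_div_assoc', div_eq_div_iff (ne_of_gt hD2pos) (ne_of_gt hC2pos)]
      linear_combination (-P) * id2
    rw [hx, hy, hz] at hsum
    have hm2 : (0 : ℝ) < (m : ℝ) + 2 := by positivity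
    have hnn : (0 : ℝ) < (c2 : ℝ) + 2 + e := by positivity
    have hkey : ((m : ℝ) + 1) * (A / C1) ≤ P / C2 := by
      rw [le_inv_mul_iff₀ hm2] at hsum
      have h12 : ((c2 : ℝ) + 2 + e) * (((m : ℝ) + 1) * (A / C1))
          ≤ ((c2 : ℝ) + 2 + e) * (P / C2) := by nlinarith [hsum]
      exact le_of_mul_le_mul_left h12 hnn
    rw [one_mul, ← div_div, ← div_div, ← mul_div_assoc]
    apply div_le_div_of_nonneg_right ?_ hNpos.le
    rw [le_inv_mul_iff₀ (by positivity : (0:ℝ) < ((m + 1 : ℕ) : ℝ))]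
    calc ((m + 1 : ℕ) : ℝ) * (A / C1) = ((m : ℝ) + 1) * (A / C1) := by push_cast; ring
      _ ≤ P / C2 := hkey


/-- **Perfect double balance is inherited without loss**: if a set `f` of `k`-faces of a
pure `d`-dimensional complex is `1`-double balanced in dimension `ℓ`, then it is
`1`-double balanced in every dimension `ℓ' < ℓ`. -/
theorem perfect_double_balance_inheritance {V : Type*} [DecidableEq V] [Fintype V]
    (X : SC V) (d k ℓ : ℕ) (hpure : X.Pure d) (hℓk : ℓ < k) (hkd : k ≤ d)
    (f : Finset (Finset V)) (hf : f ⊆ X.kFaces k)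
    (hdb : X.DoubleBalanced d k f 1 ℓ) :
    ∀ ℓ' < ℓ, X.DoubleBalanced d k f 1 ℓ' := by
  intro ℓ' hℓ'
  have key : ∀ j, j ≤ ℓ → X.DoubleBalanced d k f 1 (ℓ - j) := by
    intro j
    induction j with
    | zero => intro _; simpa using hdb
    | succ n ih =>
      intro hn
      have h1 := ih (by omega)
      rw [show ℓ - n = (ℓ - (n + 1)) + 1 from by omega] at h1
      exact aux_onestep X d k (ℓ - (n + 1)) hpure (by omega) hkd f hf h1
  have h2 := key (ℓ - ℓ') (by omega)
  rwa [show ℓ - (ℓ - ℓ') = ℓ' from by omega] at h2
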